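/- Let V be a finite-dimensional real vector space with decomposition V = V' ⊕ V'', with positive definite quadratic forms q' on V' and q'' on V''. Then the map sending a positive definite quadratic form q on V satisfying q|_{V'} = q' and j_*q = q'' (where j : V → V'' is the projection and j_*q(v'') = min_{j(v)=v''} q(v)) to the induced bilinear pairing between V' and V'' is a bijection onto Hom_ℝ(V' ⊗ V'', ℝ). -/

import Mathlib

open QuadraticMap LinearMap

private lemma sInf_shift {α : Type*} [Nonempty α] (f : α → ℝ) (c : ℝ) (h0 : ∀ a, 0 ≤ f a) :
    sInf (Set.range fun a => f a + c) = sInf (Set.range f) + c := by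
  have hb : BddBelow (Set.range f) := ⟨0, by rintro _ ⟨a, rfl⟩; exact h0 a⟩
  have hb' : BddBelow (Set.range fun a => f a + c) := by
    refine ⟨c, ?_⟩; rintro _ ⟨a, rfl⟩; have := h0 a; dsimp; linarith
  apply le_antisymm
  · rw [← sub_le_iff_le_add]
    refine le_csInf (Set.range_nonempty f) ?_
    rintro _ ⟨a, rfl⟩
    rw [sub_le_iff_le_add]
    exact csInf_le hb' ⟨a, rfl⟩
  · refine le_csInf (Set.range_nonempty _) ?_
    rintro _ ⟨a, rfl⟩
    exact add_le_add_left (csInf_le hb ⟨a, rfl⟩) c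

/-- Let `V = V' ⊕ V''` with positive definite forms `q'` on `V'` and `q''` on `V''`.
The map sending a positive definite quadratic form `q` on `V' × V''` with
`q|_{V'} = q'` and pushforward `j_*q = q''` along the projection `j` (defined by
`(j_*q)(v'') = inf_{v'} q(v', v'')`) to the induced bilinear pairing
`(v', v'') ↦ B(v', v'')` is a bijection onto `Hom(V' ⊗ V'', ℝ)`, i.e. onto the
set of bilinear pairings. -/
theorem extensions_biject_with_pairings
    (V' V'' : Type*) [AddCommGroup V'] [Module ℝ V'] [FiniteDimensional ℝ V']
    [AddCommGroup V''] [Module ℝ V''] [FiniteDimensional ℝ V'']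
    (q' : QuadraticForm ℝ V') (hq' : q'.PosDef)
    (q'' : QuadraticForm ℝ V'') (hq'' : q''.PosDef) :
    Set.BijOn
      (fun q : QuadraticForm ℝ (V' × V'') =>
        fun (v' : V') (v'' : V'') => (q (v', v'') - q (v', 0) - q (0, v'')) / 2)
      {q : QuadraticForm ℝ (V' × V'') | q.PosDef ∧ (∀ v' : V', q (v', 0) = q' v') ∧
        ∀ v'' : V'', sInf (Set.range fun v' : V' => q (v', v'')) = q'' v''}
      {f : V' → V'' → ℝ | ∃ B : V' →ₗ[ℝ] V'' →ₗ[ℝ] ℝ, f = fun v' v'' => B v' v''} := by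
  refine ⟨?_, ?_, ?_⟩
  · -- MapsTo
    rintro q ⟨hpd, hres, hinf⟩
    refine ⟨(1/2 : ℝ) • ((polarBilin q).compl₁₂ (LinearMap.inl ℝ V' V'') (LinearMap.inr ℝ V' V'')), ?_⟩
    funext v' v''
    simp only [LinearMap.smul_apply, LinearMap.compl₁₂_apply, LinearMap.inl_apply,
      LinearMap.inr_apply, polarBilin_apply_apply, smul_eq_mul, Prod.mk_add_mk,
      add_zero, zero_add, QuadraticMap.polar]
    ring
  · -- InjOn
    rintro q1 ⟨hpd1, hres1, hinf1⟩ q2 ⟨hpd2, hres2, hinf2⟩ heq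
    have hpt : ∀ (v' : V') (v'' : V''),
        q1 (v', v'') = q2 (v', v'') + (q1 (0, v'') - q2 (0, v'')) := by
      intro v' v''
      have h := congrFun (congrFun heq v') v''
      simp only at h
      have h1 := hres1 v'
      have h2 := hres2 v'
      field_simp at h
      linarith
    have hc : ∀ v'' : V'', q1 (0, v'') = q2 (0, v'') := by
      intro v''
      have e1 : sInf (Set.range fun v' : V' => q1 (v', v'')) =
          sInf (Set.range fun v' : V' => q2 (v', v'')) + (q1 (0, v'') - q2 (0, v'')) := by
        rw [show (fun v' : V' => q1 (v', v'')) =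
            fun v' : V' => q2 (v', v'') + (q1 (0, v'') - q2 (0, v'')) from funext fun v' => hpt v' v'']
        exact sInf_shift _ _ fun v' => hpd2.nonneg _
      rw [hinf1 v'', hinf2 v''] at e1
      linarith
    ext ⟨v', v''⟩
    rw [hpt v' v'', hc v'']
    ring
  · -- SurjOn
    rintro f ⟨B, rfl⟩
    set bp : LinearMap.BilinForm ℝ V' := polarBilin q' with hbp
    have hsym : ∀ x y : V', bp x y = bp y x := fun x y => polar_comm q' x y
    have hnd : bp.Nondegenerate := by
      refine (LinearMap.IsRefl.nondegenerate_iff_separatingLeft (B := bp) (fun x y h => by rw [hsym]; exact h)).mpr ?_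
      intro v h
      by_contra hv
      have h2 : bp v v = 2 * q' v := by
        have : bp v v = q' (v + v) - q' v - q' v := rfl
        rw [this, QuadraticMap.map_add_self]
        ring
      have := hq' v hv
      rw [h v] at h2
      linarith
    set L : V'' →ₗ[ℝ] V' :=
      (LinearMap.BilinForm.toDual bp hnd).symm.toLinearMap ∘ₗ ((2 : ℝ) • B.flip) with hL
    have hLkey : ∀ (v'' : V'') (v' : V'), bp (L v'') v' = 2 * B v' v'' := by
      intro v'' v'
      have : bp.toDual hnd (L v'') = ((2 : ℝ) • B.flip) v'' := by
        simp [hL]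
      have h2 := DFunLike.congr_fun this v'
      simpa [LinearMap.BilinForm.toDual_def] using h2
    set T : V' × V'' →ₗ[ℝ] V' := LinearMap.fst ℝ V' V'' + L ∘ₗ LinearMap.snd ℝ V' V'' with hT
    set q : QuadraticForm ℝ (V' × V'') := q'.comp T + q''.comp (LinearMap.snd ℝ V' V'') with hq
    have happ : ∀ (v' : V') (v'' : V''), q (v', v'') = q' (v' + L v'') + q'' v'' := by
      intro v' v''
      simp [hq, hT, QuadraticMap.comp_apply]
    refine ⟨q, ⟨?_, ?_, ?_⟩, ?_⟩
    · -- PosDef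
      rintro ⟨v', v''⟩ hx
      rcases eq_or_ne v'' 0 with h | h
      · subst h
        have hv' : v' ≠ 0 := by
          intro h; apply hx; simp [h]
        rw [happ]
        simp only [map_zero, add_zero]
        exact hq' v' hv'
      · rw [happ]
        have := hq'' v'' h
        have := hq'.nonneg (v' + L v'')
        linarith
    · -- restriction
      intro v'
      rw [happ]; simp
    · -- pushforward
      intro v''
      refine IsLeast.csInf_eq ⟨⟨-L v'', ?_⟩, ?_⟩
      · show q (-L v'', v'') = q'' v''
        rw [happ]; simp
      · rintro _ ⟨v', rfl⟩
        show q'' v'' ≤ q (v', v'')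
        rw [happ]
        have := hq'.nonneg (v' + L v'')
        linarith
    · -- the pairing equals B
      funext v' v''
      have e1 : q (v', v'') = q' (v' + L v'') + q'' v'' := happ v' v''
      have e2 : q (v', 0) = q' v' := by rw [happ]; simp
      have e3 : q (0, v'') = q' (L v'') + q'' v'' := by rw [happ]; simp
      have epolar : q' (v' + L v'') = q' v' + q' (L v'') + bp v' (L v'') := by
        have : bp v' (L v'') = q' (v' + L v'') - q' v' - q' (L v'') := rfl
        linarith
      have hB := hLkey v'' v'
      rw [hsym (L v'') v'] at hB
      simp only [e1, e2, e3]
      rw [epolar, hB]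
      ring
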